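/- arXiv:0801.3939 — 4 statements merged into one kernel-verified Lean document; each statement's English description precedes it below -/
import Mathlib

section
/- Let O be the ring of integers of a finite extension K of Q_p, and let R be a commutative O-algebra that is finitely generated as an O-module. Then for every x ∈ R, the sequence (x^{n!})_{n≥1} converges in the p-adic (i.e., m_O-adic) topology on R, and its limit e is an idempotent: e² = e. -/
open Function

lemma aux_mem_span_smul_top {A M : Type*} [CommRing A] [AddCommGroup M] [Module A M]
    (a : A) (v : M) : v ∈ (Ideal.span {a} • ⊤ : Submodule A M) ↔ ∃ w, v = a • w := by
  constructor
  · intro hv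
    refine Submodule.smul_induction_on hv ?_ ?_
    · rintro r hr m -
      obtain ⟨c, rfl⟩ := Ideal.mem_span_singleton.mp hr
      exact ⟨c • m, by rw [mul_smul]⟩
    · rintro y z ⟨w, rfl⟩ ⟨w', rfl⟩
      exact ⟨w + w', (smul_add _ _ _).symm⟩
  · rintro ⟨w, rfl⟩
    exact Submodule.smul_mem_smul (Ideal.mem_span_singleton_self a) trivial

lemma aux_mem_pow_span_smul_top {A M : Type*} [CommRing A] [AddCommGroup M] [Module A M]
    (a : A) (n : ℕ) (v : M) :
    v ∈ (Ideal.span {a} ^ n • ⊤ : Submodule A M) ↔ ∃ w, v = a ^ n • w := by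
  rw [Ideal.span_singleton_pow]; exact aux_mem_span_smul_top _ _

lemma aux_monoid {M : Type*} [CommMonoid M] [Finite M] (x : M) :
    ∃ N : ℕ, 0 < N ∧ (∀ n, N ≤ n → x ^ n.factorial = x ^ N.factorial) ∧
      x ^ N.factorial * x ^ N.factorial = x ^ N.factorial := by
  obtain ⟨i, j, hne, hij⟩ := Finite.exists_ne_map_eq_of_infinite (fun n : ℕ => x ^ n)
  wlog hlt : i < j generalizing i j
  · exact this j i hne.symm hij.symm (by omega)
  set c := j - i with hc
  have hc0 : 0 < c := by omega
  have key : ∀ t a, i ≤ a → x ^ (a + t * c) = x ^ a := by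
    intro t
    induction t with
    | zero => simp
    | succ t ih =>
      intro a ha
      have h1 : x ^ (a + c) = x ^ a := by
        have e1 : a + c = (a - i) + j := by omega
        have e2 : a = (a - i) + i := by omega
        rw [e1, pow_add, ← hij, ← pow_add, ← e2]
      have e3 : a + (t + 1) * c = (a + c) + t * c := by ring
      rw [e3, ih (a + c) (by omega), h1]
  have key2 : ∀ a b, i ≤ a → i ≤ b → c ∣ a → c ∣ b → x ^ a = x ^ b := by
    have main : ∀ a b, a ≤ b → i ≤ a → c ∣ a → c ∣ b → x ^ a = x ^ b := by
      intro a b hab ha hca hcb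
      obtain ⟨t, ht⟩ : c ∣ b - a := Nat.dvd_sub hcb hca
      have hb' : b = a + c * t := by rw [← ht]; omega
      rw [hb', mul_comm c t, key t a ha]
    intro a b ha hb hca hcb
    rcases le_total a b with h | h
    · exact main a b h ha hca hcb
    · exact (main b a h hb hcb hca).symm
  refine ⟨i + c, by omega, ?_, ?_⟩
  · intro n hn
    refine key2 _ _ ?_ ?_ ?_ ?_
    · exact le_trans (by omega) (Nat.self_le_factorial n)
    · exact le_trans (by omega) (Nat.self_le_factorial (i + c))
    · exact Nat.dvd_factorial hc0 (by omega)
    · exact Nat.dvd_factorial hc0 (by omega)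
  · rw [← pow_add]
    refine key2 _ _ ?_ ?_ ?_ ?_
    · have := Nat.self_le_factorial (i + c); omega
    · exact le_trans (by omega) (Nat.self_le_factorial (i + c))
    · exact Dvd.dvd.add (Nat.dvd_factorial hc0 (by omega)) (Nat.dvd_factorial hc0 (by omega))
    · exact Nat.dvd_factorial hc0 (by omega)

lemma aux_precomplete_surj {A M N : Type*} [CommRing A] [AddCommGroup M] [Module A M]
    [AddCommGroup N] [Module A N] (I : Ideal A) [inst : IsPrecomplete I M]
    (π : M →ₗ[A] N) (hπ : Surjective π) : IsPrecomplete I N := by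
  constructor
  intro f hf
  have hstep : ∀ n : ℕ, ∃ u : M, u ∈ (I ^ n • ⊤ : Submodule A M) ∧ π u = f (n + 1) - f n := by
    intro n
    have h1 : f (n + 1) - f n ∈ (I ^ n • ⊤ : Submodule A N) := by
      have := (SModEq.sub_mem).mp (hf (Nat.le_succ n))
      simpa [neg_sub] using Submodule.neg_mem _ this
    have h2 : (I ^ n • ⊤ : Submodule A N) = Submodule.map π (I ^ n • ⊤ : Submodule A M) := by
      rw [Submodule.map_smul'', Submodule.map_top, LinearMap.range_eq_top.mpr hπ]
    rw [h2] at h1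
    obtain ⟨u, hu1, hu2⟩ := h1
    exact ⟨u, hu1, hu2⟩
  choose u hu1 hu2 using hstep
  obtain ⟨v0, hv0⟩ := hπ (f 0)
  set g : ℕ → M := fun n => v0 + ∑ j ∈ Finset.range n, u j with hg
  have hgsucc : ∀ n, g (n + 1) = g n + u n := by
    intro n; simp [hg, Finset.sum_range_succ, add_assoc]
  have hgπ : ∀ n, π (g n) = f n := by
    intro n
    induction n with
    | zero => simpa [hg] using hv0
    | succ n ih => rw [hgsucc, map_add, ih, hu2]; abel
  have hmono : ∀ m n, m ≤ n → g n - g m ∈ (I ^ m • ⊤ : Submodule A M) := by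
    intro m n hmn
    induction hmn with
    | refl => simpa using Submodule.zero_mem _
    | @step n hmn ih =>
      have : g (n + 1) - g m = (g n - g m) + u n := by rw [hgsucc]; abel
      rw [this]
      refine Submodule.add_mem _ ih ?_
      exact Submodule.smul_mono_left (Ideal.pow_le_pow_right hmn) (hu1 n)
  have hpre : ∀ {m n}, m ≤ n → g m ≡ g n [SMOD (I ^ m • ⊤ : Submodule A M)] := by
    intro m n hmn
    rw [SModEq.sub_mem]
    simpa [neg_sub] using Submodule.neg_mem _ (hmono m n hmn)
  obtain ⟨L, hL⟩ := inst.prec hpre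
  refine ⟨π L, fun n => ?_⟩
  rw [SModEq.sub_mem]
  have h3 : f n - π L = π (g n - L) := by rw [map_sub, hgπ]
  rw [h3]
  have h2 : Submodule.map π (I ^ n • ⊤ : Submodule A M) ≤ (I ^ n • ⊤ : Submodule A N) := by
    rw [Submodule.map_smul'', Submodule.map_top]
    exact smul_mono_right _ le_top
  exact h2 (Submodule.mem_map_of_mem ((SModEq.sub_mem).mp (hL n)))

lemma aux_precomplete_pi {A : Type*} [CommRing A] (a : A) (ι : Type*)
    [inst : IsPrecomplete (Ideal.span {a}) A] :
    IsPrecomplete (Ideal.span {a}) (ι → A) := by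
  constructor
  intro f hf
  have hcomp : ∀ i : ι, ∃ L : A, ∀ n,
      f n i ≡ L [SMOD ((Ideal.span {a}) ^ n • ⊤ : Submodule A A)] := by
    intro i
    apply inst.prec (f := fun n => f n i)
    intro m n hmn
    rw [SModEq.sub_mem]
    have h1 := (SModEq.sub_mem).mp (hf hmn)
    rw [aux_mem_pow_span_smul_top] at h1 ⊢
    obtain ⟨w, hw⟩ := h1
    exact ⟨w i, by have := congrFun hw i; simpa using this⟩
  choose L hL using hcomp
  refine ⟨L, fun n => ?_⟩
  rw [SModEq.sub_mem, aux_mem_pow_span_smul_top]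
  have hW : ∀ i, ∃ w, f n i - L i = a ^ n • w := fun i =>
    (aux_mem_pow_span_smul_top _ _ _).mp ((SModEq.sub_mem).mp (hL i n))
  choose w hw using hW
  exact ⟨w, funext fun i => by simpa using hw i⟩


/-- The idempotent limit lemma: for `O` the ring of integers of a finite extension `K`
of `ℚ_p` and `R` a commutative `O`-algebra which is finite as an `O`-module, for every
`x ∈ R` the sequence `x ^ n!` converges in the `m_O`-adic topology on `R` to an
idempotent `e`. -/
theorem stmt0 (p : ℕ) [Fact p.Prime] (K : Type*) [Field K] [Algebra ℚ_[p] K]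
    [FiniteDimensional ℚ_[p] K] [Algebra ℤ_[p] K] [IsScalarTower ℤ_[p] ℚ_[p] K]
    (O : Type*) [CommRing O] (hO : Nonempty (O ≃+* (integralClosure ℤ_[p] K)))
    [IsLocalRing O]
    (R : Type*) [CommRing R] [Algebra O R] [Module.Finite O R] (x : R) :
    ∃ e : R, e * e = e ∧
      ∀ k : ℕ, ∃ N : ℕ, ∀ n : ℕ, N ≤ n →
        x ^ n.factorial - e ∈
          Ideal.map (algebraMap O R) (IsLocalRing.maximalIdeal O ^ k) := by
  classical
  obtain ⟨ε⟩ := hO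
  letI : Algebra ℤ_[p] O := ((ε.symm : integralClosure ℤ_[p] K →+* O).comp
    (algebraMap ℤ_[p] (integralClosure ℤ_[p] K))).toAlgebra
  letI : Algebra ℤ_[p] R := ((algebraMap O R).comp (algebraMap ℤ_[p] O)).toAlgebra
  haveI : IsScalarTower ℤ_[p] O R := IsScalarTower.of_algebraMap_eq' rfl
  haveI : CharZero K := charZero_of_injective_algebraMap (algebraMap ℚ_[p] K).injective
  haveI hfinO' : Module.Finite ℤ_[p] (integralClosure ℤ_[p] K) :=
    IsIntegralClosure.finite ℤ_[p] ℚ_[p] K (integralClosure ℤ_[p] K)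
  -- transfer finiteness from the integral closure to O
  have hsmul : ∀ (c : ℤ_[p]) (y : integralClosure ℤ_[p] K),
      ε.symm (c • y) = c • ε.symm y := by
    intro c y
    rw [Algebra.smul_def, Algebra.smul_def, map_mul]
    rfl
  haveI : Module.Finite ℤ_[p] O := Module.Finite.of_surjective
    { toFun := ε.symm, map_add' := fun a b => map_add _ a b,
      map_smul' := fun c y => hsmul c y : integralClosure ℤ_[p] K →ₗ[ℤ_[p]] O } ε.symm.surjective
  haveI : Module.Finite ℤ_[p] R := Module.Finite.trans O R
  -- p is in the maximal ideal of O
  have hp : p.Prime := Fact.out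
  have hpO : (p : O) ∈ IsLocalRing.maximalIdeal O := by
    rw [IsLocalRing.mem_maximalIdeal, mem_nonunits_iff]
    intro hu
    have hu' : IsUnit (p : integralClosure ℤ_[p] K) := by
      have := hu.map (ε : O →+* integralClosure ℤ_[p] K)
      simpa using this
    obtain ⟨y, hy⟩ := isUnit_iff_exists_inv.mp hu'
    have hyK : (p : K) * (y : K) = 1 := by
      have := congrArg (algebraMap (integralClosure ℤ_[p] K) K) hy
      simpa using this
    have hy2 : ((p : K))⁻¹ = (y : K) := inv_eq_of_mul_eq_one_right hyK
    have hyval : (y : K) = algebraMap ℚ_[p] K ((p : ℚ_[p])⁻¹) := by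
      rw [← hy2, ← map_natCast (algebraMap ℚ_[p] K) p, ← map_inv₀]
    have hyint : IsIntegral ℤ_[p] ((y : K)) := y.2
    rw [hyval] at hyint
    have hint : IsIntegral ℤ_[p] ((p : ℚ_[p])⁻¹) :=
      (isIntegral_algebraMap_iff (algebraMap ℚ_[p] K).injective).mp hyint
    obtain ⟨z, hz⟩ := IsIntegrallyClosed.isIntegral_iff.mp hint
    have hzn : ‖(z : ℚ_[p])‖ ≤ 1 := PadicInt.norm_le_one z
    rw [PadicInt.algebraMap_apply] at hz
    rw [hz, norm_inv, Padic.norm_p] at hzn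
    have hp1 : (1 : ℝ) < p := by exact_mod_cast hp.one_lt
    rw [inv_inv] at hzn
    linarith
  -- chain of ideals in R
  set J : ℕ → Ideal R := fun n => Ideal.span {(p : R) ^ n} with hJ
  have hbridge : ∀ (n : ℕ) (v : R),
      v ∈ (Ideal.span {(p : ℤ_[p])} ^ n • ⊤ : Submodule ℤ_[p] R) ↔ v ∈ J n := by
    intro n v
    rw [aux_mem_pow_span_smul_top, hJ]
    simp only [Ideal.mem_span_singleton]
    constructor
    · rintro ⟨w, rfl⟩
      exact ⟨w, by rw [Algebra.smul_def, map_pow, map_natCast]⟩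
    · rintro ⟨w, hw⟩
      exact ⟨w, by rw [hw, Algebra.smul_def, map_pow, map_natCast]⟩
  have htarget : ∀ k : ℕ, J k ≤ Ideal.map (algebraMap O R) (IsLocalRing.maximalIdeal O ^ k) := by
    intro k
    rw [hJ, Ideal.span_le, Set.singleton_subset_iff]
    have h1 : (p : R) ^ k = algebraMap O R ((p : O) ^ k) := by rw [map_pow, map_natCast]
    show (p : R) ^ k ∈ _
    rw [h1]
    exact Ideal.mem_map_of_mem _ (Ideal.pow_mem_pow hpO k)
  -- the quotients R ⧸ J n are finite
  have hfin : ∀ n : ℕ, Finite (R ⧸ J n) := by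
    intro n
    haveI : NeZero (p ^ n) := ⟨pow_ne_zero n hp.ne_zero⟩
    have hkill : ∀ q : R ⧸ J n, ((p : ℤ_[p]) ^ n) • q = 0 := by
      intro q
      obtain ⟨r, rfl⟩ := Ideal.Quotient.mk_surjective q
      have h1 : ((p : ℤ_[p]) ^ n) • (Ideal.Quotient.mk (J n) r)
          = Ideal.Quotient.mk (J n) (((p : ℤ_[p]) ^ n) • r) :=
        (map_smul (Ideal.Quotient.mkₐ ℤ_[p] (J n)) _ r).symm
      rw [h1, Ideal.Quotient.eq_zero_iff_mem, Algebra.smul_def, map_pow, map_natCast, hJ]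
      exact Ideal.mem_span_singleton.mpr (dvd_mul_right _ _)
    haveI : Module.Finite ℤ_[p] (R ⧸ J n) := Module.Finite.of_surjective
      (Ideal.Quotient.mkₐ ℤ_[p] (J n)).toLinearMap (Ideal.Quotient.mkₐ_surjective ℤ_[p] _)
    obtain ⟨m, φ, hφ⟩ := Module.Finite.exists_fin' ℤ_[p] (R ⧸ J n)
    refine Finite.of_surjective
      (fun v : Fin m → ZMod (p ^ n) => φ (fun i => ((v i).val : ℤ_[p]))) ?_
    intro q
    obtain ⟨a, rfl⟩ := hφ q
    refine ⟨fun i => PadicInt.toZModPow n (a i), ?_⟩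
    have hdiff : ∀ i, ∃ c : ℤ_[p],
        ((((PadicInt.toZModPow n) (a i)).val : ℤ_[p])) - a i = (p : ℤ_[p]) ^ n * c := by
      intro i
      have hker : ((((PadicInt.toZModPow n) (a i)).val : ℕ) : ℤ_[p]) - a i
          ∈ RingHom.ker (PadicInt.toZModPow (p := p) n) := by
        rw [RingHom.mem_ker, map_sub, map_natCast, ZMod.natCast_rightInverse _, sub_self]
      rw [PadicInt.ker_toZModPow] at hker
      exact Ideal.mem_span_singleton.mp hker
    choose c hc using hdiff
    have heq : (fun i => ((((PadicInt.toZModPow n) (a i)).val : ℕ) : ℤ_[p]))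
        = a + ((p : ℤ_[p]) ^ n) • c := by
      funext i
      have := hc i
      simp only [Pi.add_apply, Pi.smul_apply, smul_eq_mul]
      linear_combination this
    show φ (fun i => ((((PadicInt.toZModPow n) (a i)).val : ℕ) : ℤ_[p])) = φ a
    rw [heq, map_add, map_smul, hkill, add_zero]
  -- eventual stabilization in each quotient
  have hA : ∀ n : ℕ, ∃ N : ℕ, 0 < N ∧
      (∀ j, N ≤ j → (Ideal.Quotient.mk (J n) x) ^ j.factorial
        = (Ideal.Quotient.mk (J n) x) ^ N.factorial) ∧
      (Ideal.Quotient.mk (J n) x) ^ N.factorial * (Ideal.Quotient.mk (J n) x) ^ N.factorial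
        = (Ideal.Quotient.mk (J n) x) ^ N.factorial := by
    intro n
    haveI := hfin n
    exact aux_monoid _
  choose N hN0 hNs hNi using hA
  set Mf : ℕ → ℕ := fun k => (Finset.range (k + 1)).sup N with hMf
  have hMN : ∀ k, N k ≤ Mf k := fun k => Finset.le_sup (Finset.self_mem_range_succ k)
  have hMmono : Monotone Mf := fun k l h =>
    Finset.sup_mono (Finset.range_subset_range.mpr (by omega))
  set f : ℕ → R := fun k => x ^ (Mf k).factorial with hf
  have hcauchy : ∀ {k l : ℕ}, k ≤ l → f k - f l ∈ J k := by
    intro k l hkl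
    have h1 : Ideal.Quotient.mk (J k) (f k) = Ideal.Quotient.mk (J k) (f l) := by
      rw [hf]
      simp only [map_pow]
      rw [hNs k (Mf k) (hMN k), hNs k (Mf l) (le_trans (hMN k) (hMmono hkl))]
    exact (Ideal.Quotient.eq).mp h1
  -- R is precomplete
  obtain ⟨m, π, hπ⟩ := Module.Finite.exists_fin' ℤ_[p] R
  haveI : IsPrecomplete (Ideal.span {(p : ℤ_[p])}) ℤ_[p] := by
    rw [← PadicInt.maximalIdeal_eq_span_p]
    exact (inferInstance : IsAdicComplete (IsLocalRing.maximalIdeal ℤ_[p]) ℤ_[p]).toIsPrecomplete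
  haveI := aux_precomplete_pi (p : ℤ_[p]) (Fin m)
  have hprec : IsPrecomplete (Ideal.span {(p : ℤ_[p])}) R := aux_precomplete_surj _ π hπ
  obtain ⟨e, he⟩ := hprec.prec (f := f) (by
    intro k l hkl
    rw [SModEq.sub_mem, hbridge]
    exact hcauchy hkl)
  -- p is a non-unit of ℤ_[p]
  have hp1 : (1 : ℝ) < p := by exact_mod_cast hp.one_lt
  have hpnu : ¬IsUnit (p : ℤ_[p]) := by
    intro h
    have h2 := PadicInt.isUnit_iff.mp h
    rw [PadicInt.norm_p, inv_eq_one] at h2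
    linarith
  -- p lies in every maximal ideal of R
  have hpmax : ∀ Q : Ideal R, Q.IsMaximal → (p : R) ∈ Q := by
    intro Q hQ
    by_contra hpQ
    obtain ⟨b, c, hc, hbc⟩ := hQ.exists_inv hpQ
    haveI : Module.Finite ℤ_[p] (R ⧸ Q) := Module.Finite.of_surjective
      (Ideal.Quotient.mkₐ ℤ_[p] Q).toLinearMap (Ideal.Quotient.mkₐ_surjective ℤ_[p] _)
    have htop : (⊤ : Submodule ℤ_[p] (R ⧸ Q)) ≤ Ideal.span {(p : ℤ_[p])} • ⊤ := by
      intro q _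
      obtain ⟨r, rfl⟩ := Ideal.Quotient.mk_surjective q
      rw [aux_mem_span_smul_top]
      refine ⟨Ideal.Quotient.mk Q (b * r), ?_⟩
      rw [Algebra.smul_def, map_natCast, ← map_natCast (Ideal.Quotient.mk Q) p, ← map_mul]
      refine (Ideal.Quotient.eq).mpr ?_
      have h2 : r - (p : R) * (b * r) = c * r := by linear_combination (-r) * hbc
      rw [h2]
      exact Q.mul_mem_right r hc
    have hjac : Ideal.span {(p : ℤ_[p])} ≤ Ideal.jacobson (⊥ : Ideal ℤ_[p]) := by
      rw [IsLocalRing.jacobson_eq_maximalIdeal (⊥ : Ideal ℤ_[p]) bot_ne_top,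
        Ideal.span_le, Set.singleton_subset_iff]
      exact hpnu
    have hbot : (⊤ : Submodule ℤ_[p] (R ⧸ Q)) = ⊥ :=
      Submodule.eq_bot_of_le_smul_of_le_jacobson_bot (Ideal.span {(p : ℤ_[p])}) ⊤
        (Module.finite_def.mp inferInstance) htop hjac
    have h1 : (1 : R ⧸ Q) ∈ (⊥ : Submodule ℤ_[p] (R ⧸ Q)) := hbot ▸ Submodule.mem_top
    rw [Submodule.mem_bot] at h1
    exact one_ne_zero h1
  -- Hausdorff property
  haveI : IsNoetherianRing R := isNoetherianRing_iff.mpr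
    (isNoetherian_of_tower ℤ_[p]
      (isNoetherian_of_isNoetherianRing_of_finite ℤ_[p] R))
  have hhaus : ∀ r : R, (∀ k, r ∈ J k) → r = 0 := by
    intro r hr
    have hmem : r ∈ (⨅ i : ℕ, (Ideal.span {(p : R)}) ^ i • ⊤ : Submodule R R) := by
      rw [Submodule.mem_iInf]
      intro i
      rw [aux_mem_pow_span_smul_top]
      obtain ⟨w, hw⟩ := Ideal.mem_span_singleton.mp (hr i)
      exact ⟨w, by rw [hw, smul_eq_mul]⟩
    obtain ⟨s, hs⟩ := (Ideal.mem_iInf_smul_pow_eq_bot_iff (I := Ideal.span {(p : R)}) r).mp hmem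
    have hsunit : IsUnit (1 - (s : R)) := by
      by_contra hns
      obtain ⟨Q, hQmax, hQ⟩ := exists_max_ideal_of_mem_nonunits hns
      have h1 : (s : R) ∈ Q := by
        obtain ⟨w, hw⟩ := Ideal.mem_span_singleton.mp s.2
        rw [hw]
        exact Q.mul_mem_right _ (hpmax Q hQmax)
      have h2 : (1 : R) ∈ Q := by
        have := Q.add_mem hQ h1
        simpa using this
      exact hQmax.ne_top (Q.eq_top_iff_one.mpr h2)
    have h3 : (1 - (s : R)) * r = 0 := by
      have h2 : (s : R) * r = r := by rw [← smul_eq_mul]; exact hs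
      rw [sub_mul, one_mul, h2, sub_self]
    exact (hsunit.mul_right_eq_zero).mp h3
  have hek : ∀ k, e - f k ∈ J k := by
    intro k
    have h1 := (SModEq.sub_mem).mp (he k)
    rw [hbridge] at h1
    have := (J k).neg_mem h1
    simpa [neg_sub] using this
  have hmke : ∀ k, Ideal.Quotient.mk (J k) e = (Ideal.Quotient.mk (J k) x) ^ (N k).factorial := by
    intro k
    have h1 : Ideal.Quotient.mk (J k) e = Ideal.Quotient.mk (J k) (f k) :=
      (Ideal.Quotient.eq).mpr (hek k)
    rw [h1, hf]
    rw [map_pow]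
    exact hNs k (Mf k) (hMN k)
  have he2 : e * e = e := by
    apply sub_eq_zero.mp
    apply hhaus
    intro k
    apply (Ideal.Quotient.eq).mp
    rw [map_mul, hmke k, hNi k]
  refine ⟨e, he2, ?_⟩
  intro k
  refine ⟨Mf k, fun n hn => ?_⟩
  have h1 : x ^ n.factorial - f k ∈ J k := by
    apply (Ideal.Quotient.eq).mp
    rw [hf, map_pow, map_pow, hNs k n (le_trans (hMN k) hn), hNs k (Mf k) (hMN k)]
  have h2 : f k - e ∈ J k := by
    have := (J k).neg_mem (hek k)
    simpa [neg_sub] using this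
  have h3 : x ^ n.factorial - e = (x ^ n.factorial - f k) + (f k - e) := by ring
  exact htarget k (h3 ▸ (J k).add_mem h1 h2)
end

section
/- Let R be a commutative ring and α, β, γ, δ ∈ R. Define sequences a_n = Σ_{i+j=n} α^i β^j and b_n = Σ_{i+j=n} γ^i δ^j for n ≥ 0. Then in the formal power series ring R[[X]] one has the identity (Σ_{n≥0} a_n b_n X^n)·(1 − αγX)(1 − αδX)(1 − βγX)(1 − βδX) = 1 − αβγδX². -/
open PowerSeries Finset

lemma geom_inv {S : Type*} [CommRing S] (r : S) :
    (PowerSeries.mk fun n => r ^ n) * (1 - PowerSeries.C (R := S) r * X) = 1 := by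
  ext n
  cases n with
  | zero => simp
  | succ n =>
    have h : (PowerSeries.mk fun n => r ^ n) * (C (R := S) r * X)
        = ((PowerSeries.mk fun n => r ^ n) * C (R := S) r) * X := by ring
    simp [mul_sub, h, coeff_succ_mul_X, coeff_mul_C, pow_succ]

lemma sub_mul_antidiag {S : Type*} [CommRing S] (α β : S) (n : ℕ) :
    (α - β) * ∑ ij ∈ Finset.HasAntidiagonal.antidiagonal n, α ^ ij.1 * β ^ ij.2
      = α ^ (n+1) - β ^ (n+1) := by
  rw [Finset.Nat.sum_antidiagonal_eq_sum_range_succ_mk, mul_comm]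
  simpa using geom_sum₂_mul α β (n+1)

lemma key {S : Type*} [CommRing S] (α β γ δ : S) :
    PowerSeries.C (R := S) ((α - β) * (γ - δ)) *
      ((PowerSeries.mk fun n => (∑ ij ∈ Finset.HasAntidiagonal.antidiagonal n, α ^ ij.1 * β ^ ij.2) *
          (∑ ij ∈ Finset.HasAntidiagonal.antidiagonal n, γ ^ ij.1 * δ ^ ij.2)) *
        (1 - PowerSeries.C (R := S) (α * γ) * PowerSeries.X) *
        (1 - PowerSeries.C (R := S) (α * δ) * PowerSeries.X) *
        (1 - PowerSeries.C (R := S) (β * γ) * PowerSeries.X) *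
        (1 - PowerSeries.C (R := S) (β * δ) * PowerSeries.X)) =
      PowerSeries.C (R := S) ((α - β) * (γ - δ)) *
        (1 - PowerSeries.C (R := S) (α * β * γ * δ) * PowerSeries.X ^ 2) := by
  have hmk : PowerSeries.C (R := S) ((α - β) * (γ - δ)) *
      (PowerSeries.mk fun n => (∑ ij ∈ Finset.HasAntidiagonal.antidiagonal n, α ^ ij.1 * β ^ ij.2) *
          (∑ ij ∈ Finset.HasAntidiagonal.antidiagonal n, γ ^ ij.1 * δ ^ ij.2))
      = C (R := S) (α*γ) * (PowerSeries.mk fun n => (α*γ)^n) - C (R := S) (α*δ) * (PowerSeries.mk fun n => (α*δ)^n)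
        - C (R := S) (β*γ) * (PowerSeries.mk fun n => (β*γ)^n) + C (R := S) (β*δ) * (PowerSeries.mk fun n => (β*δ)^n) := by
    ext n
    simp only [coeff_C_mul, coeff_mk, map_sub, map_add]
    have h : (α - β) * (γ - δ) *
        ((∑ ij ∈ Finset.HasAntidiagonal.antidiagonal n, α ^ ij.1 * β ^ ij.2) *
          (∑ ij ∈ Finset.HasAntidiagonal.antidiagonal n, γ ^ ij.1 * δ ^ ij.2))
        = ((α - β) * ∑ ij ∈ Finset.HasAntidiagonal.antidiagonal n, α ^ ij.1 * β ^ ij.2) *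
          ((γ - δ) * ∑ ij ∈ Finset.HasAntidiagonal.antidiagonal n, γ ^ ij.1 * δ ^ ij.2) := by ring
    rw [h, sub_mul_antidiag, sub_mul_antidiag]
    ring
  have g1 := geom_inv (S := S) (α*γ)
  have g2 := geom_inv (S := S) (α*δ)
  have g3 := geom_inv (S := S) (β*γ)
  have g4 := geom_inv (S := S) (β*δ)
  have step : PowerSeries.C (R := S) ((α - β) * (γ - δ)) *
      ((PowerSeries.mk fun n => (∑ ij ∈ Finset.HasAntidiagonal.antidiagonal n, α ^ ij.1 * β ^ ij.2) *
          (∑ ij ∈ Finset.HasAntidiagonal.antidiagonal n, γ ^ ij.1 * δ ^ ij.2)) *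
        (1 - C (R := S) (α * γ) * X) * (1 - C (R := S) (α * δ) * X) *
        (1 - C (R := S) (β * γ) * X) * (1 - C (R := S) (β * δ) * X))
      = (C (R := S) (α*γ) * (PowerSeries.mk fun n => (α*γ)^n) - C (R := S) (α*δ) * (PowerSeries.mk fun n => (α*δ)^n)
        - C (R := S) (β*γ) * (PowerSeries.mk fun n => (β*γ)^n) + C (R := S) (β*δ) * (PowerSeries.mk fun n => (β*δ)^n)) *
        ((1 - C (R := S) (α * γ) * X) * (1 - C (R := S) (α * δ) * X) *
        (1 - C (R := S) (β * γ) * X) * (1 - C (R := S) (β * δ) * X)) := by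
    rw [← hmk]; ring
  rw [step]
  simp only [map_mul, map_sub, map_one] at *
  linear_combination
    (C (R := S) α * C (R := S) γ * ((1 - C (R := S) α * C (R := S) δ * X) * (1 - C (R := S) β * C (R := S) γ * X) * (1 - C (R := S) β * C (R := S) δ * X))) * g1
    - (C (R := S) α * C (R := S) δ * ((1 - C (R := S) α * C (R := S) γ * X) * (1 - C (R := S) β * C (R := S) γ * X) * (1 - C (R := S) β * C (R := S) δ * X))) * g2
    - (C (R := S) β * C (R := S) γ * ((1 - C (R := S) α * C (R := S) γ * X) * (1 - C (R := S) α * C (R := S) δ * X) * (1 - C (R := S) β * C (R := S) δ * X))) * g3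
    + (C (R := S) β * C (R := S) δ * ((1 - C (R := S) α * C (R := S) γ * X) * (1 - C (R := S) α * C (R := S) δ * X) * (1 - C (R := S) β * C (R := S) γ * X))) * g4

lemma map_mk' {S T : Type*} [CommRing S] [CommRing T] (φ : S →+* T) (f : ℕ → S) :
    PowerSeries.map φ (PowerSeries.mk f) = PowerSeries.mk fun n => φ (f n) := by
  ext n; simp

/-- The Rankin–Selberg local identity: with
`a_n = Σ_{i+j=n} α^i β^j` and `b_n = Σ_{i+j=n} γ^i δ^j`, one has
`(Σ a_n b_n X^n)(1−αγX)(1−αδX)(1−βγX)(1−βδX) = 1 − αβγδ X²` in `R⟦X⟧`. -/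
theorem stmt4 (R : Type*) [CommRing R] (α β γ δ : R) (a b : ℕ → R)
    (ha : ∀ n : ℕ, a n = ∑ ij ∈ Finset.HasAntidiagonal.antidiagonal n, α ^ ij.1 * β ^ ij.2)
    (hb : ∀ n : ℕ, b n = ∑ ij ∈ Finset.HasAntidiagonal.antidiagonal n, γ ^ ij.1 * δ ^ ij.2) :
    (PowerSeries.mk fun n => a n * b n) *
        (1 - PowerSeries.C (R := R) (α * γ) * PowerSeries.X) *
        (1 - PowerSeries.C (R := R) (α * δ) * PowerSeries.X) *
        (1 - PowerSeries.C (R := R) (β * γ) * PowerSeries.X) *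
        (1 - PowerSeries.C (R := R) (β * δ) * PowerSeries.X) =
      1 - PowerSeries.C (R := R) (α * β * γ * δ) * PowerSeries.X ^ 2 := by
  classical
  let A := MvPolynomial (Fin 4) ℤ
  let α' : A := MvPolynomial.X 0
  let β' : A := MvPolynomial.X 1
  let γ' : A := MvPolynomial.X 2
  let δ' : A := MvPolynomial.X 3
  have hXne : ∀ i j : Fin 4, i ≠ j → (MvPolynomial.X i : A) ≠ MvPolynomial.X j := by
    intro i j hij h
    have := congrArg (MvPolynomial.eval (fun k : Fin 4 => if k = i then (1:ℤ) else 0)) h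
    simp [hij.symm] at this
  have hk : ((α' - β') * (γ' - δ')) ≠ 0 :=
    mul_ne_zero (sub_ne_zero.mpr (hXne 0 1 (by decide)))
      (sub_ne_zero.mpr (hXne 2 3 (by decide)))
  have hC : (PowerSeries.C (R := A) ((α' - β') * (γ' - δ'))) ≠ 0 := fun h =>
    hk (by simpa using congrArg (PowerSeries.coeff 0) h)
  have gen := mul_left_cancel₀ hC (key α' β' γ' δ')
  let φ : A →+* R := (MvPolynomial.aeval ![α, β, γ, δ]).toRingHom
  have himg := congrArg (PowerSeries.map φ) gen
  simp only [map_mul, map_sub, map_one, PowerSeries.map_C, PowerSeries.map_X, map_pow,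
    map_mk'] at himg
  have hφ0 : φ α' = α := by
    show (MvPolynomial.aeval ![α, β, γ, δ]) (MvPolynomial.X 0) = α
    rw [MvPolynomial.aeval_X]
    simp [Matrix.cons_val_two, Matrix.cons_val_three, Matrix.tail_cons]
  have hφ1 : φ β' = β := by
    show (MvPolynomial.aeval ![α, β, γ, δ]) (MvPolynomial.X 1) = β
    rw [MvPolynomial.aeval_X]
    simp [Matrix.cons_val_two, Matrix.cons_val_three, Matrix.tail_cons]
  have hφ2 : φ γ' = γ := by
    show (MvPolynomial.aeval ![α, β, γ, δ]) (MvPolynomial.X 2) = γ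
    rw [MvPolynomial.aeval_X]
    simp [Matrix.cons_val_two, Matrix.cons_val_three, Matrix.tail_cons]
  have hφ3 : φ δ' = δ := by
    show (MvPolynomial.aeval ![α, β, γ, δ]) (MvPolynomial.X 3) = δ
    rw [MvPolynomial.aeval_X]
    simp [Matrix.cons_val_two, Matrix.cons_val_three, Matrix.tail_cons]
  have hab : (PowerSeries.mk fun n => a n * b n)
      = PowerSeries.mk fun n =>
        φ ((∑ ij ∈ Finset.HasAntidiagonal.antidiagonal n, α' ^ ij.1 * β' ^ ij.2) *
           (∑ ij ∈ Finset.HasAntidiagonal.antidiagonal n, γ' ^ ij.1 * δ' ^ ij.2)) := by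
    ext n
    simp [coeff_mk, ha n, hb n, map_sum, map_mul, map_pow, hφ0, hφ1, hφ2, hφ3]
  rw [hab]
  convert himg using 3 <;> simp [map_mul, hφ0, hφ1, hφ2, hφ3]
end

section
/- Let k ≥ 1, p a prime, and g : ℍ → ℂ with g|_k τ_{Mp} = W·g for some M, W, where τ_X = (0,−1;X,0) and g|[p](z) = g(pz). Then (g − g|[p]) |_k τ_{Mp²} = −p^{−k/2} · W · (g − p^k · g|[p]). -/
/-- If `g|_k τ_{Mp} = W·g` then `(g − g|[p]) |_k τ_{Mp²} = −p^{−k/2}·W·(g − p^k·g|[p])`,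
where `τ_X = (0,−1;X,0)`, `g|[p](z) = g(pz)` and the weight-`k` slash action is
normalized with the `det^{k/2}` factor; all slash actions are written out explicitly. -/
theorem stmt6 (k : ℕ) (hk : 1 ≤ k) (p : ℕ) (hp : p.Prime) (g : ℂ → ℂ)
    (M : ℝ) (hM : 0 < M) (W : ℂ)
    (hg : ∀ z : ℂ, 0 < z.im →
      ((M : ℂ) * p) ^ ((k : ℂ) / 2) * (((M : ℂ) * p) * z) ^ (-(k : ℤ)) *
          g (-1 / (((M : ℂ) * p) * z)) = W * g z) :
    ∀ z : ℂ, 0 < z.im →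
      ((M : ℂ) * p ^ 2) ^ ((k : ℂ) / 2) * (((M : ℂ) * p ^ 2) * z) ^ (-(k : ℤ)) *
          (g (-1 / (((M : ℂ) * p ^ 2) * z)) - g ((p : ℂ) * (-1 / (((M : ℂ) * p ^ 2) * z)))) =
        -((p : ℂ) ^ (-(k : ℂ) / 2)) * W * (g z - (p : ℂ) ^ k * g ((p : ℂ) * z)) := by
  intro z hz
  have hppos : (0:ℝ) < p := by exact_mod_cast hp.pos
  have hz0 : z ≠ 0 := by rintro rfl; simp at hz
  have hp0 : (p:ℂ) ≠ 0 := Nat.cast_ne_zero.2 hp.pos.ne'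
  have hM0 : (M:ℂ) ≠ 0 := Complex.ofReal_ne_zero.2 hM.ne'
  have hpz : (0:ℝ) < ((p:ℂ) * z).im := by
    have h : ((p:ℂ) * z).im = p * z.im := by simp [Complex.mul_im]
    rw [h]; positivity
  have h1 := hg z hz
  have h2 := hg ((p:ℂ) * z) hpz
  rw [show ((M:ℂ) * p) * ((p:ℂ) * z) = ((M:ℂ) * p ^ 2) * z from by ring] at h2
  set u : ℂ := ((M:ℂ) * p ^ 2) * z with hu
  set v : ℂ := ((M:ℂ) * p) * z with hv
  have hu0 : u ≠ 0 := by
    apply mul_ne_zero (mul_ne_zero hM0 (pow_ne_zero 2 hp0)) hz0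
  have hv0 : v ≠ 0 := mul_ne_zero (mul_ne_zero hM0 hp0) hz0
  have huv : u = v * p := by rw [hu, hv]; ring
  rw [show (p:ℂ) * (-1 / u) = -1 / v from by
    rw [hu, hv]; field_simp]
  set q : ℂ := (p:ℂ) ^ ((k:ℂ)/2) with hq
  have hq0 : q ≠ 0 := by
    rw [hq, Ne, Complex.cpow_eq_zero_iff]
    tauto
  have hqq : q * q = (p:ℂ) ^ k := by
    rw [hq, ← Complex.cpow_add _ _ hp0,
      show (k:ℂ)/2 + (k:ℂ)/2 = (k:ℂ) from by ring, Complex.cpow_natCast]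
  have hqneg : (p:ℂ) ^ (-(k:ℂ)/2) = q⁻¹ := by
    rw [neg_div, Complex.cpow_neg, hq]
  set c1 : ℂ := ((M:ℂ) * p) ^ ((k:ℂ)/2) with hc1
  have hc10 : c1 ≠ 0 := by
    rw [hc1, Ne, Complex.cpow_eq_zero_iff]
    push_neg
    intro h; exact absurd h (mul_ne_zero hM0 hp0)
  have hc2 : ((M:ℂ) * p ^ 2) ^ ((k:ℂ)/2) = c1 * q := by
    have key := Complex.mul_cpow_ofReal_nonneg (le_of_lt (mul_pos hM hppos))
      (le_of_lt hppos) ((k:ℂ)/2)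
    push_cast at key
    rw [show (M:ℂ) * (p:ℂ) ^ 2 = (M:ℂ) * p * p from by ring]
    rw [key, hc1, hq]
  rw [hc2]
  -- turn zpow into pow
  have hzu : u ^ (-(k:ℤ)) = (u ^ k)⁻¹ := by
    rw [zpow_neg, zpow_natCast]
  have hzv : v ^ (-(k:ℤ)) = (v ^ k)⁻¹ := by
    rw [zpow_neg, zpow_natCast]
  rw [hzu] at h2 ⊢
  rw [hzv] at h1
  have huk : u ^ k = v ^ k * (p:ℂ) ^ k := by rw [huv, mul_pow]
  rw [hqneg]
  field_simp [hu0] at h1 h2 ⊢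
  linear_combination (c1 * g (-(1 / u)) - c1 * g (-(1 / v))) * hqq
    + (p:ℂ) ^ k * h2 - (p:ℂ) ^ k * h1 + W * g z * huk
end

section
/- Let R be a commutative ring, α, β, ε ∈ R with ε² = 1. Define a_n = Σ_{i+j=n} α^i β^j and s_n = Σ_{d=0}^{n} ε^d (the coefficients of the weight-one Eisenstein-type series with character ε at a prime q). Then in R[[X]]: (Σ_{n≥0} a_n s_n X^n)·(1 − αX)(1 − βX)(1 − αεX)(1 − βεX) = 1 − αβεX². -/
open PowerSeries Finset

private def Dop {R : Type*} [CommRing R] (c : R) (t : ℕ → R) : ℕ → R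
  | 0 => t 0
  | n+1 => t (n+1) - c * t n

private lemma mk_mul_oneSub {R : Type*} [CommRing R] (t : ℕ → R) (c : R) :
    PowerSeries.mk t * (1 - PowerSeries.C c * PowerSeries.X) = PowerSeries.mk (Dop c t) := by
  ext n
  rw [mul_sub, mul_one, map_sub, coeff_mk]
  have : PowerSeries.mk t * (PowerSeries.C c * PowerSeries.X)
      = PowerSeries.C c * (PowerSeries.mk t * PowerSeries.X) := by ring
  rw [this]
  cases n with
  | zero => simp [Dop]
  | succ k => rw [PowerSeries.coeff_C_mul, PowerSeries.coeff_succ_mul_X, coeff_mk, coeff_mk]; rfl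

/-- The Rankin–Selberg local identity against a weight-one Eisenstein series:
with `a_n = Σ_{i+j=n} α^i β^j`, `ε² = 1` and `s_n = Σ_{d=0}^n ε^d`, one has
`(Σ a_n s_n X^n)(1−αX)(1−βX)(1−αεX)(1−βεX) = 1 − αβε X²` in `R⟦X⟧`. -/
theorem stmt17 (R : Type*) [CommRing R] (α β ε : R) (hε : ε ^ 2 = 1)
    (a s : ℕ → R)
    (ha : ∀ n : ℕ, a n = ∑ ij ∈ Finset.HasAntidiagonal.antidiagonal n, α ^ ij.1 * β ^ ij.2)
    (hs : ∀ n : ℕ, s n = ∑ d ∈ Finset.range (n + 1), ε ^ d) :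
    (PowerSeries.mk fun n => a n * s n) *
        (1 - PowerSeries.C α * PowerSeries.X) *
        (1 - PowerSeries.C β * PowerSeries.X) *
        (1 - PowerSeries.C (α * ε) * PowerSeries.X) *
        (1 - PowerSeries.C (β * ε) * PowerSeries.X) =
      1 - PowerSeries.C (α * β * ε) * PowerSeries.X ^ 2 := by
  -- recurrences
  have ha' : ∀ n, a n = ∑ k ∈ Finset.range (n+1), α ^ k * β ^ (n - k) := by
    intro n
    rw [ha, Finset.Nat.sum_antidiagonal_eq_sum_range_succ (fun i j => α ^ i * β ^ j)]
  have ha1 : ∀ n, a (n+1) = β * a n + α ^ (n+1) := by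
    intro n
    rw [ha', ha', Finset.sum_range_succ, Finset.mul_sum]
    simp only [Nat.sub_self, pow_zero, mul_one, Nat.add_sub_cancel_left, Nat.add_sub_cancel]
    congr 1
    apply Finset.sum_congr rfl
    intro k hk
    have hk' : k ≤ n := Nat.lt_succ_iff.mp (Finset.mem_range.mp hk)
    rw [show n + 1 - k = (n - k) + 1 by omega, pow_succ]
    ring
  have ha2 : ∀ n, a (n+2) = (α + β) * a (n+1) - α * β * a n := by
    intro n
    have h1 := ha1 n
    have h2 := ha1 (n+1)
    have : α ^ (n+1+1) = α * α ^ (n+1) := by rw [pow_succ]; ring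
    rw [this] at h2
    linear_combination h2 - α * h1
  have hs1 : ∀ n, s (n+1) = s n + ε ^ (n+1) := by
    intro n
    rw [hs, hs, Finset.sum_range_succ]
  have hs2 : ∀ n, s (n+2) = (1 + ε) * s (n+1) - ε * s n := by
    intro n
    have h1 := hs1 n
    have h2 := hs1 (n+1)
    have : ε ^ (n+1+1) = ε * ε ^ (n+1) := by rw [pow_succ]; ring
    rw [this] at h2
    linear_combination h2 - ε * h1
  have ha0 : a 0 = 1 := by simp [ha]
  have ha10 : a 1 = α + β := by
    have := ha1 0; rw [ha0] at this; rw [this]; ring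
  have hs0 : s 0 = 1 := by simp [hs]
  have hs10 : s 1 = 1 + ε := by
    have := hs1 0; rw [hs0] at this; rw [this]; ring
  rw [mk_mul_oneSub, mk_mul_oneSub, mk_mul_oneSub, mk_mul_oneSub]
  ext n
  rw [coeff_mk, map_sub, PowerSeries.coeff_one, PowerSeries.coeff_C_mul,
    PowerSeries.coeff_X_pow]
  rcases n with _|_|_|_|n
  · simp [Dop, ha0, hs0]
  · simp only [Dop, ha0, hs0, ha10, hs10]
    norm_num
    ring
  · simp only [Dop]
    have h2a := ha2 0; rw [ha0, ha10] at h2a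
    have h2s := hs2 0; rw [hs0, hs10] at h2s
    rw [h2a, h2s, ha10, hs10, ha0, hs0]
    norm_num
    ring
  · simp only [Dop]
    have h2a := ha2 0; rw [ha0, ha10] at h2a
    have h2s := hs2 0; rw [hs0, hs10] at h2s
    have h3a := ha2 1; rw [h2a, ha10] at h3a
    have h3s := hs2 1; rw [h2s, hs10] at h3s
    rw [h3a, h3s, h2a, h2s, ha10, hs10, ha0, hs0]
    norm_num
    ring
  · simp only [Dop]
    rw [ha2 (n+2), ha2 (n+1), ha2 n, hs2 (n+2), hs2 (n+1), hs2 n,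
      if_neg (show ¬(n + 1 + 1 + 1 + 1 = 0) by omega),
      if_neg (show ¬(n + 1 + 1 + 1 + 1 = 2) by omega)]
    ring
end
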